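/- Let M > 0 and 0 < r < 1/(Me). Then the function g(x) = M·e^(rx) − x has exactly two real zeros λ and μ, and they satisfy 0 < λ < Me < 1/r < μ. -/

import Mathlib

open Real

lemma combo_lt_aux {f : ℝ → ℝ} (hf : StrictConvexOn ℝ Set.univ f) {u v w : ℝ}
    (h1 : u < v) (h2 : v < w) :
    f v < (w - v)/(w - u) * f u + (v - u)/(w - u) * f w := by
  have huw : u < w := h1.trans h2
  have hd : 0 < w - u := by linarith
  have ha : 0 < (w - v)/(w - u) := div_pos (by linarith) hd
  have hb : 0 < (v - u)/(w - u) := div_pos (by linarith) hd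
  have hab : (w - v)/(w - u) + (v - u)/(w - u) = 1 := by field_simp; ring
  have h := hf.2 (Set.mem_univ u) (Set.mem_univ w) (ne_of_lt huw) ha hb hab
  rw [smul_eq_mul, smul_eq_mul] at h
  have hv : (w - v)/(w - u) * u + (v - u)/(w - u) * w = v := by
    field_simp; ring
  rwa [hv] at h

lemma g_sconv (M r : ℝ) (hM : 0 < M) (hr : r ≠ 0) :
    StrictConvexOn ℝ Set.univ (fun x => M * Real.exp (r * x) - x) := by
  refine ⟨convex_univ, fun x _ y _ hxy a b ha hb hab => ?_⟩
  have hne : r * x ≠ r * y := fun h => hxy (mul_left_cancel₀ hr h)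
  have hexp := strictConvexOn_exp.2 (Set.mem_univ (r * x)) (Set.mem_univ (r * y)) hne ha hb hab
  simp only [smul_eq_mul] at hexp
  simp only [smul_eq_mul]
  have harg : r * (a * x + b * y) = a * (r * x) + b * (r * y) := by ring
  rw [harg]
  nlinarith [mul_lt_mul_of_pos_left hexp hM]

theorem stmt_0 (M r : ℝ) (hM : 0 < M) (hr : 0 < r) (hre : r < 1 / (M * Real.exp 1)) :
    ∃ lam mu : ℝ,
      M * Real.exp (r * lam) - lam = 0 ∧
      M * Real.exp (r * mu) - mu = 0 ∧
      0 < lam ∧ lam < M * Real.exp 1 ∧ M * Real.exp 1 < 1 / r ∧ 1 / r < mu ∧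
      ∀ x : ℝ, M * Real.exp (r * x) - x = 0 → x = lam ∨ x = mu := by
  set g : ℝ → ℝ := fun x => M * Real.exp (r * x) - x with hg
  have hMe : 0 < M * Real.exp 1 := mul_pos hM (exp_pos 1)
  have hrMe : r * (M * Real.exp 1) < 1 := by
    have := (lt_div_iff₀ hMe).mp hre
    linarith
  have hMelt : M * Real.exp 1 < 1 / r := by
    rw [lt_div_iff₀ hr]; linarith [hrMe]
  have hcont : Continuous g := by
    apply Continuous.sub
    · exact continuous_const.mul (Real.continuous_exp.comp (continuous_const.mul continuous_id))
    · exact continuous_id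
  -- sign facts
  have hg0 : 0 < g 0 := by simp [hg, hM]
  have hgMe : g (M * Real.exp 1) < 0 := by
    have h1 : Real.exp (r * (M * Real.exp 1)) < Real.exp 1 := exp_lt_exp.mpr hrMe
    have := mul_lt_mul_of_pos_left h1 hM
    simp only [hg]
    linarith
  have hginv : g (1 / r) < 0 := by
    have : r * (1 / r) = 1 := by field_simp
    simp only [hg, this]
    linarith
  -- big point
  set X : ℝ := 4 / (M * r ^ 2) + 1 / r with hX
  have hXinv : 1 / r < X := by
    have : 0 < 4 / (M * r ^ 2) := by positivity
    linarith
  have hXpos : 0 < X := lt_trans (by positivity) hXinv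
  clear_value X
  have hgX : 0 < g X := by
    have hXr : 0 < M * r * X := by positivity
    have h1 : r * X / 2 + 1 ≤ Real.exp (r * X / 2) := Real.add_one_le_exp _
    have h2 : Real.exp (r * X) = Real.exp (r * X / 2) * Real.exp (r * X / 2) := by
      rw [← Real.exp_add]; ring_nf
    have h3 : 0 < r * X / 2 + 1 := by positivity
    have h4 : (r * X / 2 + 1) ^ 2 ≤ Real.exp (r * X) := by
      rw [h2]; nlinarith
    have h5 : M * (r * X / 2 + 1) ^ 2 ≤ M * Real.exp (r * X) :=
      mul_le_mul_of_nonneg_left h4 hM.le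
    have h8 : M * r ^ 2 * X ^ 2 = (4 + M * r) * X := by
      rw [hX]; field_simp
    simp only [hg]
    have h11 : M * (r * X / 2 + 1) ^ 2 = X + M * r * X / 4 + M * r * X + M := by
      linear_combination h8 / 4
    linarith [h5, h11, hXr, hM]
  -- IVT for lam
  obtain ⟨lam, hlam_mem, hlam⟩ :=
    intermediate_value_Ioo' hMe.le hcont.continuousOn (Set.mem_Ioo.mpr ⟨hgMe, hg0⟩)
  obtain ⟨mu, hmu_mem, hmu⟩ :=
    intermediate_value_Ioo hXinv.le hcont.continuousOn (Set.mem_Ioo.mpr ⟨hginv, hgX⟩)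
  obtain ⟨hlam1, hlam2⟩ := hlam_mem
  obtain ⟨hmu1, hmu2⟩ := hmu_mem
  have hlm : lam < mu := by linarith
  have hlam0 : M * Real.exp (r * lam) - lam = 0 := hlam
  have hmu0 : M * Real.exp (r * mu) - mu = 0 := hmu
  have hsc := g_sconv M r hM (ne_of_gt hr)
  refine ⟨lam, mu, hlam, hmu, hlam1, hlam2, hMelt, hmu1, fun x hx => ?_⟩
  by_contra hcon
  push_neg at hcon
  obtain ⟨hxl, hxm⟩ := hcon
  rcases lt_trichotomy x lam with h | h | h
  · have hc := combo_lt_aux hsc h hlm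
    rw [hx, hmu0] at hc
    simp at hc
    linarith [hlam0, hc]
  · exact hxl h
  · rcases lt_trichotomy x mu with h' | h' | h'
    · have hc := combo_lt_aux hsc h h'
      rw [hlam0, hmu0] at hc
      simp at hc
      linarith [hx, hc]
    · exact hxm h'
    · have hc := combo_lt_aux hsc hlm h'
      rw [hlam0, hx] at hc
      simp at hc
      linarith [hmu0, hc]
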